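/- Let $G_1 \cong \mathbb{Z}/2^{s_1}t_1\mathbb{Z} \oplus \mathbb{Z}/2^{r_1}w_1\mathbb{Z}$ and $G_2 \cong \mathbb{Z}/2^{s_2}t_2\mathbb{Z} \oplus \mathbb{Z}/2^{r_2}w_2\mathbb{Z}$ with all $t_i, w_i$ odd, $s_i \leq r_i$, and $r_1 \geq 1$. Then the proportion of pairs $(P_1, P_2) \in G_1 \times G_2$ with $\nu_2(\mathrm{ord}(P_1)) = \nu_2(\mathrm{ord}(P_2))$ is at most $5/8$, with the maximum $5/8$ attained when $s_1 = r_1 = s_2 = r_2 = 1$. -/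

import Mathlib

def gg (s r k : ℕ) : ℕ := 2 ^ (min k s + min k r)

def dd (s r : ℕ) : ℕ → ℕ
  | 0 => 1
  | (k+1) => gg s r (k+1) - gg s r k

lemma gg_mono (s r : ℕ) {j k : ℕ} (h : j ≤ k) : gg s r j ≤ gg s r k :=
  Nat.pow_le_pow_right (by norm_num)
    (by have := min_le_min_right s h; have := min_le_min_right r h; omega)

lemma gg_of_le (s r k : ℕ) (hs : s ≤ k) (hr : r ≤ k) : gg s r k = 2 ^ (s + r) := by
  unfold gg; rw [min_eq_right hs, min_eq_right hr]

lemma gg_congr {s s' r r' k : ℕ} (h1 : min k s = min k s') (h2 : min k r = min k r') :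
    gg s r k = gg s' r' k := by unfold gg; rw [h1, h2]

lemma dd_congr {s s' r r' : ℕ} (k : ℕ) (h1 : min k s = min k s') (h2 : min k r = min k r')
    (h3 : min (k-1) s = min (k-1) s') (h4 : min (k-1) r = min (k-1) r') :
    dd s r k = dd s' r' k := by
  cases k with
  | zero => rfl
  | succ j =>
    show gg s r (j+1) - gg s r j = gg s' r' (j+1) - gg s' r' j
    rw [gg_congr h1 h2, gg_congr (by omega : min j s = min j s') (by omega : min j r = min j r')]

lemma dd_zero_of_lt (s r k : ℕ) (hs : s ≤ r) (h : r < k) : dd s r k = 0 := by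
  obtain ⟨j, rfl⟩ : ∃ j, k = j + 1 := ⟨k - 1, by omega⟩
  show gg s r (j+1) - gg s r j = 0
  rw [gg_of_le s r (j+1) (by omega) (by omega), gg_of_le s r j (by omega) (by omega)]
  omega

lemma dd_top (s r : ℕ) (hs : s ≤ r) : dd s (r+1) (r+1) = 2 ^ (s + r) := by
  show gg s (r+1) (r+1) - gg s (r+1) r = _
  unfold gg
  rw [min_eq_right (by omega), min_eq_right (le_refl _), min_eq_right hs, min_eq_left (by omega)]
  have h : s + (r + 1) = (s + r) + 1 := by omega
  rw [h, pow_succ]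
  omega

lemma dd_diag_top (s : ℕ) : dd (s+1) (s+1) (s+1) = 3 * 4 ^ s := by
  show gg (s+1) (s+1) (s+1) - gg (s+1) (s+1) s = _
  unfold gg
  rw [min_eq_right (le_refl _), min_eq_left (by omega)]
  have h1 : (2:ℕ) ^ (s+1+(s+1)) = 4 * 4 ^ s := by
    rw [show s+1+(s+1) = 2*s + 2 by omega, pow_add, pow_mul]; ring_nf
  have h2 : (2:ℕ) ^ (s+s) = 4 ^ s := by rw [show s+s = 2*s by omega, pow_mul]; norm_num
  rw [h1, h2]
  omega

lemma sq_diag (s : ℕ) (hs : 1 ≤ s) :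
    8 * ∑ k ∈ Finset.range (s+1), (dd s s k)^2 ≤ 5 * 4 ^ (s + s) := by
  induction s with
  | zero => omega
  | succ n ih =>
    rcases Nat.eq_or_lt_of_le hs with h1 | h1
    · simp only [← h1]
      decide
    · have hn : 1 ≤ n := by omega
      have step : ∑ k ∈ Finset.range (n+2), (dd (n+1) (n+1) k)^2
          = ∑ k ∈ Finset.range (n+1), (dd n n k)^2 + (3 * 4 ^ n)^2 := by
        rw [Finset.sum_range_succ, dd_diag_top]
        congr 1
        apply Finset.sum_congr rfl
        intro k hk
        simp only [Finset.mem_range] at hk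
        rw [show dd (n+1) (n+1) k = dd n n k from
          dd_congr k (by omega) (by omega) (by omega) (by omega)]
      rw [step]
      have ihh := ih hn
      have h4 : (4:ℕ)^(n+1+(n+1)) = 16 * 4^(n+n) := by ring
      have h9 : (3*4^n)^2 = 9 * 4^(n+n) := by ring
      omega

lemma sq_sum (s r : ℕ) (hsr : s ≤ r) (hr : 1 ≤ r) :
    8 * ∑ k ∈ Finset.range (r+1), (dd s r k)^2 ≤ 5 * 4 ^ (s + r) := by
  induction r with
  | zero => omega
  | succ n ih =>
    rcases Nat.eq_or_lt_of_le hsr with h1 | h1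
    · subst h1
      exact sq_diag _ hr
    · have hsn : s ≤ n := by omega
      rcases Nat.eq_zero_or_pos n with h0 | h0
      · subst h0
        have hs0 : s = 0 := by omega
        subst hs0
        decide
      have step : ∑ k ∈ Finset.range (n+2), (dd s (n+1) k)^2
          = ∑ k ∈ Finset.range (n+1), (dd s n k)^2 + (2 ^ (s + n))^2 := by
        rw [Finset.sum_range_succ, dd_top s n hsn]
        congr 1
        apply Finset.sum_congr rfl
        intro k hk
        simp only [Finset.mem_range] at hk
        rw [show dd s (n+1) k = dd s n k from
          dd_congr k (by omega) (by omega) (by omega) (by omega)]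
      rw [step]
      have h4 : (4:ℕ)^(s+(n+1)) = 4 * 4^(s+n) := by ring
      have h2 : ((2:ℕ)^(s+n))^2 = 4^(s+n) := by
        rw [← pow_mul, show (s+n)*2 = 2*(s+n) by omega, pow_mul]; norm_num
      have ihh := ih hsn h0
      omega

lemma sq_sum' (s r K : ℕ) (hsr : s ≤ r) (hr : 1 ≤ r) (hK : r ≤ K) :
    8 * ∑ k ∈ Finset.range (K+1), (dd s r k)^2 ≤ 5 * 4 ^ (s + r) := by
  have he : ∑ k ∈ Finset.range (K+1), (dd s r k)^2
      = ∑ k ∈ Finset.range (r+1), (dd s r k)^2 := by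
    symm
    apply Finset.sum_subset
    · intro x hx
      simp only [Finset.mem_range] at *
      omega
    · intro x _ hx
      simp only [Finset.mem_range] at hx
      rw [dd_zero_of_lt s r x hsr (by omega)]
      norm_num
  rw [he]
  exact sq_sum s r hsr hr

lemma card_smul_zero (n c : ℕ) [NeZero n] :
    (Finset.univ.filter fun x : ZMod n => c • x = 0).card = Nat.gcd n c := by
  have hn : n ≠ 0 := NeZero.ne n
  set g := Nat.gcd n c with hg
  have hg0 : 0 < g := Nat.gcd_pos_of_pos_left c (Nat.pos_of_ne_zero hn)
  set m := n / g with hm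
  have hmdvd : m ∣ n := Nat.div_dvd_of_dvd (Nat.gcd_dvd_left n c)
  have hgc : g ∣ c := Nat.gcd_dvd_right n c
  have hnm : n = m * g := by
    rw [hm, Nat.div_mul_cancel (Nat.gcd_dvd_left n c)]
  have key : ∀ x : ZMod n, c • x = 0 ↔ x ∈ AddSubgroup.zmultiples ((m : ℕ) : ZMod n) := by
    intro x
    constructor
    · intro hx
      have hxv : ((x.val : ℕ) : ZMod n) = x := ZMod.natCast_rightInverse x
      have h1 : ((c * x.val : ℕ) : ZMod n) = 0 := by
        push_cast [hxv]
        rw [← nsmul_eq_mul, hx]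
      rw [ZMod.natCast_eq_zero_iff] at h1
      have hco : Nat.Coprime m (c / g) := by
        have := Nat.coprime_div_gcd_div_gcd (m := n) (n := c) hg0
        simpa [hm] using this
      have h2 : m ∣ (c / g) * x.val := by
        have hh : m * g ∣ ((c / g) * x.val) * g := by
          have : ((c / g) * x.val) * g = c * x.val := by
            rw [mul_comm ((c/g) * x.val) g, ← mul_assoc, Nat.mul_div_cancel' hgc]
          rw [this, ← hnm]; exact h1
        exact (Nat.mul_dvd_mul_iff_right hg0).mp hh
      have h3 : m ∣ x.val := hco.dvd_of_dvd_mul_left h2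
      rw [AddSubgroup.mem_zmultiples_iff]
      refine ⟨(x.val / m : ℕ), ?_⟩
      have hvm : ((x.val / m) * m : ℕ) = x.val := Nat.div_mul_cancel h3
      rw [natCast_zsmul, nsmul_eq_mul, ← Nat.cast_mul, hvm, hxv]
    · intro hx
      rw [AddSubgroup.mem_zmultiples_iff] at hx
      obtain ⟨k, rfl⟩ := hx
      have hcm : ((c * m : ℕ) : ZMod n) = 0 := by
        rw [ZMod.natCast_eq_zero_iff]
        refine ⟨c / g, ?_⟩
        rw [hnm]
        calc c * m = (g * (c / g)) * m := by rw [Nat.mul_div_cancel' hgc]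
          _ = m * g * (c / g) := by ring
      have hc0 : c • ((m : ℕ) : ZMod n) = 0 := by
        rw [nsmul_eq_mul, ← Nat.cast_mul, hcm]
      rw [smul_comm, hc0, smul_zero]
  calc (Finset.univ.filter fun x : ZMod n => c • x = 0).card
      = Fintype.card {x : ZMod n // c • x = 0} := (Fintype.card_subtype _).symm
    _ = Nat.card {x : ZMod n // c • x = 0} := (Nat.card_eq_fintype_card).symm
    _ = Nat.card (AddSubgroup.zmultiples ((m : ℕ) : ZMod n)) :=
        Nat.card_congr (Equiv.subtypeEquivRight key)
    _ = addOrderOf ((m : ℕ) : ZMod n) := Nat.card_zmultiples _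
    _ = g := by
        rw [ZMod.addOrderOf_coe _ hn, Nat.gcd_eq_right hmdvd, hm,
          Nat.div_div_self (Nat.gcd_dvd_left n c) hn]

lemma odd_fact2 {u : ℕ} (hu : Odd u) : u.factorization 2 = 0 := by
  rw [Nat.factorization_eq_zero_iff]
  right; left
  have := Nat.odd_iff.mp hu; omega

lemma nu_le_iff {d a u k : ℕ} (hd : d ≠ 0) (hu : Odd u) (hu0 : 0 < u)
    (hdvd : d ∣ 2 ^ a * u) : d.factorization 2 ≤ k ↔ d ∣ 2 ^ k * u := by
  have hu2 : u.factorization 2 = 0 := odd_fact2 hu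
  have hku : (2 ^ k * u) ≠ 0 := by positivity
  have hfk : (2 ^ k * u).factorization 2 = k := by
    rw [Nat.factorization_mul (by positivity) hu0.ne', Nat.Prime.factorization_pow Nat.prime_two]
    simp [hu2]
  constructor
  · intro h
    rw [← Nat.factorization_le_iff_dvd hd hku]
    intro p
    rcases eq_or_ne p 2 with rfl | hp
    · simpa [hfk] using h
    · have h1 : d.factorization p ≤ (2 ^ a * u).factorization p :=
        (Nat.factorization_le_iff_dvd hd (by positivity)).mpr hdvd p
      have e1 : (2 ^ a * u).factorization p = u.factorization p := by
        rw [Nat.factorization_mul (by positivity) hu0.ne',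
          Nat.Prime.factorization_pow Nat.prime_two]
        simp [Finsupp.single_apply, hp.symm]
      have e2 : (2 ^ k * u).factorization p = u.factorization p := by
        rw [Nat.factorization_mul (by positivity) hu0.ne',
          Nat.Prime.factorization_pow Nat.prime_two]
        simp [Finsupp.single_apply, hp.symm]
      rw [e2]; rw [e1] at h1; exact h1
  · intro h
    have := (Nat.factorization_le_iff_dvd hd hku).mpr h 2
    rwa [hfk] at this

lemma gcd_pow2 {w : ℕ} (s k : ℕ) (hw : Odd w) :
    Nat.gcd (2 ^ s) (2 ^ k * w) = 2 ^ min s k := by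
  have hcop : Nat.Coprime 2 w := by
    rw [Nat.Prime.coprime_iff_not_dvd Nat.prime_two]
    have := Nat.odd_iff.mp hw; omega
  rcases le_total s k with h | h
  · rw [min_eq_left h]
    exact Nat.gcd_eq_left (Dvd.dvd.mul_right (pow_dvd_pow 2 h) w)
  · rw [min_eq_right h]
    have h1 : (2:ℕ) ^ s = 2 ^ k * 2 ^ (s - k) := by rw [← pow_add]; congr 1; omega
    rw [h1, Nat.gcd_mul_left, Nat.Coprime.gcd_eq_one (Nat.Coprime.pow_left _ hcop), mul_one]

lemma gcd_full {t w : ℕ} (s k : ℕ) (hw : Odd w) :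
    Nat.gcd (2 ^ s * t) (2 ^ k * (t * w)) = 2 ^ min s k * t := by
  have h : 2 ^ k * (t * w) = t * (2 ^ k * w) := by ring
  rw [h, mul_comm (2 ^ s) t, Nat.gcd_mul_left, gcd_pow2 s k hw, mul_comm]

section group
variable (s r t w : ℕ) (ht : Odd t) (hw : Odd w) (ht0 : 0 < t) (hw0 : 0 < w) (hsr : s ≤ r)

lemma smul_modulus (n c : ℕ) (h : n ∣ c) (x : ZMod n) : c • x = 0 := by
  obtain ⟨d, rfl⟩ := h
  rw [nsmul_eq_mul]
  push_cast
  rw [ZMod.natCast_self]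
  ring

include ht hw ht0 hw0 in
lemma nu_le_iff_smul (k : ℕ) (P : ZMod (2 ^ s * t) × ZMod (2 ^ r * w)) :
    (addOrderOf P).factorization 2 ≤ k ↔ (2 ^ k * (t * w)) • P = 0 := by
  haveI : NeZero (2 ^ s * t) := ⟨by positivity⟩
  haveI : NeZero (2 ^ r * w) := ⟨by positivity⟩
  have hd : addOrderOf P ≠ 0 := (addOrderOf_pos P).ne'
  have hcard : Fintype.card (ZMod (2 ^ s * t) × ZMod (2 ^ r * w)) = 2 ^ (s + r) * (t * w) := by
    rw [Fintype.card_prod, ZMod.card, ZMod.card, pow_add]; ring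
  have hdvd : addOrderOf P ∣ 2 ^ (s + r) * (t * w) := hcard ▸ addOrderOf_dvd_card
  rw [nu_le_iff hd (ht.mul hw) (by positivity) hdvd, addOrderOf_dvd_iff_nsmul_eq_zero]

include ht hw ht0 hw0 hsr in
lemma nu_bound (P : ZMod (2 ^ s * t) × ZMod (2 ^ r * w)) :
    (addOrderOf P).factorization 2 ≤ r := by
  rw [nu_le_iff_smul s r t w ht hw ht0 hw0 r P]
  have h1 : (2 ^ s * t) ∣ 2 ^ r * (t * w) :=
    ⟨2 ^ (r - s) * w, by rw [show 2^r = 2^s * 2^(r-s) by rw [← pow_add]; congr 1; omega]; ring⟩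
  have h2 : (2 ^ r * w) ∣ 2 ^ r * (t * w) := ⟨t, by ring⟩
  have e1 : ((2 ^ r * (t * w)) • P).1 = (2 ^ r * (t * w)) • P.1 := rfl
  have e2 : ((2 ^ r * (t * w)) • P).2 = (2 ^ r * (t * w)) • P.2 := rfl
  refine Prod.ext ?_ ?_
  · rw [e1, smul_modulus _ _ h1]; rfl
  · rw [e2, smul_modulus _ _ h2]; rfl

include ht hw ht0 hw0 in
lemma filter_nu_le_card [NeZero (2 ^ s * t)] [NeZero (2 ^ r * w)] (k : ℕ) :
    (Finset.univ.filter fun P : ZMod (2 ^ s * t) × ZMod (2 ^ r * w) =>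
      (addOrderOf P).factorization 2 ≤ k).card = (t * w) * gg s r k := by
  set c := 2 ^ k * (t * w) with hc
  have h1 : (Finset.univ.filter fun P : ZMod (2 ^ s * t) × ZMod (2 ^ r * w) =>
      (addOrderOf P).factorization 2 ≤ k) =
      Finset.univ.filter fun P : ZMod (2 ^ s * t) × ZMod (2 ^ r * w) =>
        c • P.1 = 0 ∧ c • P.2 = 0 := by
    apply Finset.filter_congr
    intro P _
    rw [nu_le_iff_smul s r t w ht hw ht0 hw0 k P]
    constructor
    · intro h; exact ⟨congrArg Prod.fst h, congrArg Prod.snd h⟩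
    · intro h; exact Prod.ext h.1 h.2
  rw [h1, ← Finset.univ_product_univ]
  rw [show (Finset.filter (fun P : ZMod (2 ^ s * t) × ZMod (2 ^ r * w) =>
        c • P.1 = 0 ∧ c • P.2 = 0) (Finset.univ ×ˢ Finset.univ)) =
      (Finset.filter (fun x : ZMod (2 ^ s * t) => c • x = 0) Finset.univ) ×ˢ
      (Finset.filter (fun y : ZMod (2 ^ r * w) => c • y = 0) Finset.univ) by
    ext P
    simp only [Finset.mem_filter, Finset.mem_product]
    tauto]
  rw [Finset.card_product,
    card_smul_zero, card_smul_zero, hc, gcd_full s k hw,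
    show 2 ^ k * (t * w) = 2 ^ k * (w * t) by ring, gcd_full r k ht, gg]
  rw [min_comm s k, min_comm r k, pow_add]
  ring

include ht hw ht0 hw0 in
lemma filter_nu_eq_card [NeZero (2 ^ s * t)] [NeZero (2 ^ r * w)] (k : ℕ) :
    (Finset.univ.filter fun P : ZMod (2 ^ s * t) × ZMod (2 ^ r * w) =>
      (addOrderOf P).factorization 2 = k).card = (t * w) * dd s r k := by
  cases k with
  | zero =>
    have h : (Finset.univ.filter fun P : ZMod (2 ^ s * t) × ZMod (2 ^ r * w) =>
        (addOrderOf P).factorization 2 = 0) =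
        (Finset.univ.filter fun P : ZMod (2 ^ s * t) × ZMod (2 ^ r * w) =>
        (addOrderOf P).factorization 2 ≤ 0) := by
      apply Finset.filter_congr; intro P _; omega
    rw [h, filter_nu_le_card s r t w ht hw ht0 hw0 0]
    show _ = t * w * 1
    simp [gg]
  | succ j =>
    have hsub : (Finset.univ.filter fun P : ZMod (2 ^ s * t) × ZMod (2 ^ r * w) =>
        (addOrderOf P).factorization 2 ≤ j) ⊆
        (Finset.univ.filter fun P : ZMod (2 ^ s * t) × ZMod (2 ^ r * w) =>
        (addOrderOf P).factorization 2 ≤ j + 1) := by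
      intro P hP
      simp only [Finset.mem_filter, Finset.mem_univ, true_and] at *
      omega
    have h : (Finset.univ.filter fun P : ZMod (2 ^ s * t) × ZMod (2 ^ r * w) =>
        (addOrderOf P).factorization 2 = j + 1) =
        (Finset.univ.filter fun P : ZMod (2 ^ s * t) × ZMod (2 ^ r * w) =>
        (addOrderOf P).factorization 2 ≤ j + 1) \
        (Finset.univ.filter fun P : ZMod (2 ^ s * t) × ZMod (2 ^ r * w) =>
        (addOrderOf P).factorization 2 ≤ j) := by
      ext P
      simp only [Finset.mem_sdiff, Finset.mem_filter, Finset.mem_univ, true_and]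
      omega
    rw [h, Finset.card_sdiff_of_subset hsub, filter_nu_le_card s r t w ht hw ht0 hw0,
      filter_nu_le_card s r t w ht hw ht0 hw0]
    show _ = t * w * (gg s r (j+1) - gg s r j)
    rw [Nat.mul_sub]
end group

lemma main_count (s₁ r₁ t₁ w₁ s₂ r₂ t₂ w₂ : ℕ)
    (ht₁ : Odd t₁) (hw₁ : Odd w₁) (ht₂ : Odd t₂) (hw₂ : Odd w₂)
    (ht₁0 : 0 < t₁) (hw₁0 : 0 < w₁) (ht₂0 : 0 < t₂) (hw₂0 : 0 < w₂)
    (h₁ : s₁ ≤ r₁) (h₂ : s₂ ≤ r₂)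
    [NeZero (2 ^ s₁ * t₁)] [NeZero (2 ^ r₁ * w₁)] [NeZero (2 ^ s₂ * t₂)] [NeZero (2 ^ r₂ * w₂)] :
    (Finset.univ.filter fun P : (ZMod (2 ^ s₁ * t₁) × ZMod (2 ^ r₁ * w₁)) ×
        (ZMod (2 ^ s₂ * t₂) × ZMod (2 ^ r₂ * w₂)) =>
      (addOrderOf P.1).factorization 2 = (addOrderOf P.2).factorization 2).card
    = (t₁ * w₁) * (t₂ * w₂) *
      ∑ k ∈ Finset.range (max r₁ r₂ + 1), dd s₁ r₁ k * dd s₂ r₂ k := by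
  set K := max r₁ r₂ with hK
  set B₁ : ℕ → Finset (ZMod (2 ^ s₁ * t₁) × ZMod (2 ^ r₁ * w₁)) :=
    fun k => Finset.univ.filter fun x => (addOrderOf x).factorization 2 = k with hB₁
  set B₂ : ℕ → Finset (ZMod (2 ^ s₂ * t₂) × ZMod (2 ^ r₂ * w₂)) :=
    fun k => Finset.univ.filter fun x => (addOrderOf x).factorization 2 = k with hB₂
  have hS : (Finset.univ.filter fun P : (ZMod (2 ^ s₁ * t₁) × ZMod (2 ^ r₁ * w₁)) ×
        (ZMod (2 ^ s₂ * t₂) × ZMod (2 ^ r₂ * w₂)) =>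
      (addOrderOf P.1).factorization 2 = (addOrderOf P.2).factorization 2)
      = (Finset.range (K+1)).biUnion (fun k => (B₁ k) ×ˢ (B₂ k)) := by
    ext P
    simp only [Finset.mem_biUnion, Finset.mem_range, Finset.mem_product, Finset.mem_filter,
      Finset.mem_univ, true_and, hB₁, hB₂]
    constructor
    · intro h
      refine ⟨(addOrderOf P.1).factorization 2, ?_, rfl, h.symm⟩
      have := nu_bound s₁ r₁ t₁ w₁ ht₁ hw₁ ht₁0 hw₁0 h₁ P.1
      omega
    · rintro ⟨k, _, hk1, hk2⟩
      rw [hk1, hk2]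
  rw [hS, Finset.card_biUnion]
  · have := fun k => filter_nu_eq_card s₁ r₁ t₁ w₁ ht₁ hw₁ ht₁0 hw₁0 k
    have := fun k => filter_nu_eq_card s₂ r₂ t₂ w₂ ht₂ hw₂ ht₂0 hw₂0 k
    rw [Finset.mul_sum]
    apply Finset.sum_congr rfl
    intro k _
    rw [Finset.card_product, hB₁, hB₂,
      filter_nu_eq_card s₁ r₁ t₁ w₁ ht₁ hw₁ ht₁0 hw₁0 k,
      filter_nu_eq_card s₂ r₂ t₂ w₂ ht₂ hw₂ ht₂0 hw₂0 k]
    ring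
  · intro i _ j _ hij
    rw [Function.onFun, Finset.disjoint_left]
    rintro P hP hP'
    simp only [Finset.mem_product, Finset.mem_filter, Finset.mem_univ, true_and,
      hB₁, hB₂] at hP hP'
    exact hij (hP.1.symm.trans hP'.1)

theorem stmt17 (s₁ r₁ t₁ w₁ s₂ r₂ t₂ w₂ : ℕ)
    (ht₁ : Odd t₁) (hw₁ : Odd w₁) (ht₂ : Odd t₂) (hw₂ : Odd w₂)
    (ht₁0 : 0 < t₁) (hw₁0 : 0 < w₁) (ht₂0 : 0 < t₂) (hw₂0 : 0 < w₂)
    (h₁ : s₁ ≤ r₁) (h₂ : s₂ ≤ r₂) (hr₁ : 1 ≤ r₁) :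
    ((Nat.card {P : (ZMod (2 ^ s₁ * t₁) × ZMod (2 ^ r₁ * w₁)) ×
          (ZMod (2 ^ s₂ * t₂) × ZMod (2 ^ r₂ * w₂)) //
        (addOrderOf P.1).factorization 2 = (addOrderOf P.2).factorization 2} : ℚ) /
      (Nat.card ((ZMod (2 ^ s₁ * t₁) × ZMod (2 ^ r₁ * w₁)) ×
          (ZMod (2 ^ s₂ * t₂) × ZMod (2 ^ r₂ * w₂))) : ℚ)) ≤ 5 / 8 ∧
    (s₁ = 1 ∧ r₁ = 1 ∧ s₂ = 1 ∧ r₂ = 1 →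
      ((Nat.card {P : (ZMod (2 ^ s₁ * t₁) × ZMod (2 ^ r₁ * w₁)) ×
            (ZMod (2 ^ s₂ * t₂) × ZMod (2 ^ r₂ * w₂)) //
          (addOrderOf P.1).factorization 2 = (addOrderOf P.2).factorization 2} : ℚ) /
        (Nat.card ((ZMod (2 ^ s₁ * t₁) × ZMod (2 ^ r₁ * w₁)) ×
            (ZMod (2 ^ s₂ * t₂) × ZMod (2 ^ r₂ * w₂))) : ℚ)) = 5 / 8) := by
  haveI : NeZero (2 ^ s₁ * t₁) := ⟨by positivity⟩
  haveI : NeZero (2 ^ r₁ * w₁) := ⟨by positivity⟩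
  haveI : NeZero (2 ^ s₂ * t₂) := ⟨by positivity⟩
  haveI : NeZero (2 ^ r₂ * w₂) := ⟨by positivity⟩
  have hnum : Nat.card {P : (ZMod (2 ^ s₁ * t₁) × ZMod (2 ^ r₁ * w₁)) ×
          (ZMod (2 ^ s₂ * t₂) × ZMod (2 ^ r₂ * w₂)) //
        (addOrderOf P.1).factorization 2 = (addOrderOf P.2).factorization 2}
      = (t₁ * w₁) * (t₂ * w₂) *
        ∑ k ∈ Finset.range (max r₁ r₂ + 1), dd s₁ r₁ k * dd s₂ r₂ k := by
    rw [Nat.card_eq_fintype_card, Fintype.card_subtype,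
      main_count s₁ r₁ t₁ w₁ s₂ r₂ t₂ w₂ ht₁ hw₁ ht₂ hw₂ ht₁0 hw₁0 ht₂0 hw₂0 h₁ h₂]
  have hden : Nat.card ((ZMod (2 ^ s₁ * t₁) × ZMod (2 ^ r₁ * w₁)) ×
          (ZMod (2 ^ s₂ * t₂) × ZMod (2 ^ r₂ * w₂)))
      = (2 ^ s₁ * t₁) * (2 ^ r₁ * w₁) * ((2 ^ s₂ * t₂) * (2 ^ r₂ * w₂)) := by
    rw [Nat.card_prod, Nat.card_prod, Nat.card_prod, Nat.card_zmod, Nat.card_zmod,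
      Nat.card_zmod, Nat.card_zmod]
  set T : ℕ := ∑ k ∈ Finset.range (max r₁ r₂ + 1), dd s₁ r₁ k * dd s₂ r₂ k with hT
  set A : ℚ := 2 ^ (s₁ + r₁) with hA
  set B : ℚ := 2 ^ (s₂ + r₂) with hB
  have hA0 : 0 < A := by positivity
  have hB0 : 0 < B := by positivity
  have hodd0 : (0:ℚ) < (t₁ : ℚ) * w₁ * ((t₂:ℚ) * w₂) := by positivity
  have hratio : ((Nat.card {P : (ZMod (2 ^ s₁ * t₁) × ZMod (2 ^ r₁ * w₁)) ×
          (ZMod (2 ^ s₂ * t₂) × ZMod (2 ^ r₂ * w₂)) //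
        (addOrderOf P.1).factorization 2 = (addOrderOf P.2).factorization 2} : ℚ) /
      (Nat.card ((ZMod (2 ^ s₁ * t₁) × ZMod (2 ^ r₁ * w₁)) ×
          (ZMod (2 ^ s₂ * t₂) × ZMod (2 ^ r₂ * w₂))) : ℚ))
      = (T : ℚ) / (A * B) := by
    rw [hnum, hden]
    rw [div_eq_div_iff (by push_cast; positivity) (by positivity)]
    push_cast
    rw [hA, hB]
    push_cast
    ring
  rw [hratio]
  constructor
  · -- inequality
    rcases Nat.eq_zero_or_pos r₂ with hr2 | hr2
    · -- r₂ = 0, hence s₂ = 0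
      have hs2 : s₂ = 0 := by omega
      subst hr2; subst hs2
      have hT1 : T = 1 := by
        rw [hT, Finset.sum_eq_single_of_mem 0 (by simp)]
        · rfl
        · intro b _ hb
          rw [dd_zero_of_lt 0 0 b le_rfl (by omega), mul_zero]
      rw [hT1]
      have hB1 : B = 1 := by rw [hB]; norm_num
      have hA2 : (2:ℚ) ≤ A := by
        rw [hA]
        calc (2:ℚ) = 2 ^ 1 := by norm_num
          _ ≤ 2 ^ (s₁ + r₁) := by
            apply pow_le_pow_right₀ (by norm_num) (by omega)
      rw [div_le_iff₀ (by positivity)]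
      push_cast
      nlinarith
    · -- r₂ ≥ 1
      set K := max r₁ r₂ with hK
      have key1 := sq_sum' s₁ r₁ K h₁ hr₁ (le_max_left _ _)
      have key2 := sq_sum' s₂ r₂ K h₂ hr2 (le_max_right _ _)
      set S₁ : ℕ := ∑ k ∈ Finset.range (K+1), (dd s₁ r₁ k)^2 with hS₁
      set S₂ : ℕ := ∑ k ∈ Finset.range (K+1), (dd s₂ r₂ k)^2 with hS₂
      have hc1 : 8 * (S₁ : ℚ) ≤ 5 * A^2 := by
        have : ((8 * S₁ : ℕ) : ℚ) ≤ ((5 * 4 ^ (s₁ + r₁) : ℕ) : ℚ) := Nat.cast_le.mpr key1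
        push_cast at this
        rw [hA, ← pow_mul, show (s₁+r₁)*2 = 2*(s₁+r₁) by omega, pow_mul]
        norm_num at this ⊢
        convert this using 2
      have hc2 : 8 * (S₂ : ℚ) ≤ 5 * B^2 := by
        have : ((8 * S₂ : ℕ) : ℚ) ≤ ((5 * 4 ^ (s₂ + r₂) : ℕ) : ℚ) := Nat.cast_le.mpr key2
        push_cast at this
        rw [hB, ← pow_mul, show (s₂+r₂)*2 = 2*(s₂+r₂) by omega, pow_mul]
        norm_num at this ⊢
        convert this using 2
      have hAM : ∑ k ∈ Finset.range (K+1),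
          (2 * ((dd s₁ r₁ k : ℚ) * B) * ((dd s₂ r₂ k : ℚ) * A)) ≤
          ∑ k ∈ Finset.range (K+1),
          (((dd s₁ r₁ k : ℚ) * B)^2 + ((dd s₂ r₂ k : ℚ) * A)^2) := by
        apply Finset.sum_le_sum
        intro k _
        exact two_mul_le_add_sq _ _
      have hL : ∑ k ∈ Finset.range (K+1),
          (2 * ((dd s₁ r₁ k : ℚ) * B) * ((dd s₂ r₂ k : ℚ) * A)) = 2 * A * B * (T : ℚ) := by
        rw [hT]
        push_cast
        rw [Finset.mul_sum]
        apply Finset.sum_congr rfl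
        intro k _
        ring
      have hR : ∑ k ∈ Finset.range (K+1),
          (((dd s₁ r₁ k : ℚ) * B)^2 + ((dd s₂ r₂ k : ℚ) * A)^2)
          = B^2 * (S₁ : ℚ) + A^2 * (S₂ : ℚ) := by
        rw [Finset.sum_add_distrib, hS₁, hS₂]
        push_cast
        rw [Finset.mul_sum, Finset.mul_sum]
        congr 1
        · apply Finset.sum_congr rfl; intro k _; ring
        · apply Finset.sum_congr rfl; intro k _; ring
      rw [hL, hR] at hAM
      rw [div_le_iff₀ (by positivity)]
      nlinarith [sq_nonneg A, sq_nonneg B, mul_pos hA0 hB0,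
        mul_le_mul_of_nonneg_left hc1 (le_of_lt (by positivity : (0:ℚ) < B^2)),
        mul_le_mul_of_nonneg_left hc2 (le_of_lt (by positivity : (0:ℚ) < A^2))]
  · rintro ⟨e1, e2, e3, e4⟩
    subst e1; subst e2; subst e3; subst e4
    have hT10 : T = 10 := by rw [hT]; decide
    rw [hT10, hA, hB]
    norm_num
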